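/- Let n be a natural number and let β : Fin n → ℝ satisfy |β i| ≤ 2√2 for every i. Then ∑_i β_i + 0.2456 · ∑_i (β_i² − 4) + 0.0887 · ∑_i (β_i³ − 6 β_i) + 0.0295 · ∑_i (β_i⁴ − 8 β_i² + 8) ≥ 1.1691 · n − 1.9169 · log(∏_i (3 − β_i)), where log denotes the natural logarithm. -/

import Mathlib

open Real Finset

private lemma logstep {a b : ℝ} (ha : 0 < a) (h : a ≤ b ^ 2) : Real.log a ≤ 2 * Real.log b := by
  calc Real.log a ≤ Real.log (b ^ 2) := (Real.log_le_log_iff ha (lt_of_lt_of_le ha h)).mpr h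
    _ = 2 * Real.log b := by rw [Real.log_pow]; norm_num

private lemma tangent {x c q : ℝ} (hx : 0 < x) (hc : 0 < c) (hq : q ≤ Real.log c) :
    q + 1 - c / x ≤ Real.log x := by
  have h1 : Real.log (c / x) ≤ c / x - 1 := Real.log_le_sub_one_of_pos (by positivity)
  have h2 : Real.log (c / x) = Real.log c - Real.log x := Real.log_div (ne_of_gt hc) (ne_of_gt hx)
  linarith


private lemma logc0 : (409633024/244140625 : ℝ) ≤ Real.log (53541/10000 : ℝ) := by
  have h0 : Real.log ((53541/10000 : ℝ))⁻¹ ≤ Real.log (186772753591/1000000000000 : ℝ) := by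
    apply (Real.log_le_log_iff (by norm_num) (by norm_num)).mpr; norm_num
  have h1 : Real.log (186772753591/1000000000000 : ℝ) ≤ 2 * Real.log (216086067107/500000000000 : ℝ) := logstep (by norm_num) (by norm_num)
  have h2 : Real.log (216086067107/500000000000 : ℝ) ≤ 2 * Real.log (328699001449/500000000000 : ℝ) := logstep (by norm_num) (by norm_num)
  have h3 : Real.log (328699001449/500000000000 : ℝ) ≤ 2 * Real.log (162160168093/200000000000 : ℝ) := logstep (by norm_num) (by norm_num)
  have h4 : Real.log (162160168093/200000000000 : ℝ) ≤ 2 * Real.log (450222400727/500000000000 : ℝ) := logstep (by norm_num) (by norm_num)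
  have h5 : Real.log (450222400727/500000000000 : ℝ) ≤ 2 * Real.log (948917700043/1000000000000 : ℝ) := logstep (by norm_num) (by norm_num)
  have h6 : Real.log (948917700043/1000000000000 : ℝ) ≤ 2 * Real.log (3805172141/3906250000 : ℝ) := logstep (by norm_num) (by norm_num)
  have h7 : Real.log (3805172141/3906250000 : ℝ) ≤ 2 * Real.log (493488618941/500000000000 : ℝ) := logstep (by norm_num) (by norm_num)
  have h8 : Real.log (493488618941/500000000000 : ℝ) ≤ 2 * Real.log (993467280731/1000000000000 : ℝ) := logstep (by norm_num) (by norm_num)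
  have h9 : Real.log (993467280731/1000000000000 : ℝ) ≤ 2 * Real.log (996728288317/1000000000000 : ℝ) := logstep (by norm_num) (by norm_num)
  have h10 : Real.log (996728288317/1000000000000 : ℝ) ≤ 2 * Real.log (499181401977/500000000000 : ℝ) := logstep (by norm_num) (by norm_num)
  have h11 : Real.log (499181401977/500000000000 : ℝ) ≤ 2 * Real.log (249795266663/250000000000 : ℝ) := logstep (by norm_num) (by norm_num)
  have h12 : Real.log (249795266663/250000000000 : ℝ) ≤ 2 * Real.log (999590449461/1000000000000 : ℝ) := logstep (by norm_num) (by norm_num)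
  have h13 : Real.log (999590449461/1000000000000 : ℝ) ≤ 2 * Real.log (12497440047/12500000000 : ℝ) := logstep (by norm_num) (by norm_num)
  have h14 : Real.log (12497440047/12500000000 : ℝ) ≤ 2 * Real.log (999897596637/1000000000000 : ℝ) := logstep (by norm_num) (by norm_num)
  have h15 : Real.log (999897596637/1000000000000 : ℝ) ≤ 2 * Real.log (62496799813/62500000000 : ℝ) := logstep (by norm_num) (by norm_num)
  have h16 : Real.log (62496799813/62500000000 : ℝ) ≤ 2 * Real.log (999974398177/1000000000000 : ℝ) := logstep (by norm_num) (by norm_num)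
  have h17 : Real.log (999974398177/1000000000000 : ℝ) ≤ 2 * Real.log (999987199007/1000000000000 : ℝ) := logstep (by norm_num) (by norm_num)
  have h18 : Real.log (999987199007/1000000000000 : ℝ) ≤ 2 * Real.log (249998399871/250000000000 : ℝ) := logstep (by norm_num) (by norm_num)
  have h19 : Real.log (249998399871/250000000000 : ℝ) ≤ (249998399871/250000000000 : ℝ) - 1 := Real.log_le_sub_one_of_pos (by norm_num)
  have h20 : Real.log ((53541/10000 : ℝ))⁻¹ = - Real.log (53541/10000 : ℝ) := Real.log_inv _
  linarith

private lemma logc1 : (338815744/244140625 : ℝ) ≤ Real.log (2003/500 : ℝ) := by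
  have h0 : Real.log ((2003/500 : ℝ))⁻¹ ≤ Real.log (124812780829/500000000000 : ℝ) := by
    apply (Real.log_le_log_iff (by norm_num) (by norm_num)).mpr; norm_num
  have h1 : Real.log (124812780829/500000000000 : ℝ) ≤ 2 * Real.log (499625421349/1000000000000 : ℝ) := logstep (by norm_num) (by norm_num)
  have h2 : Real.log (499625421349/1000000000000 : ℝ) ≤ 2 * Real.log (706841864457/1000000000000 : ℝ) := logstep (by norm_num) (by norm_num)
  have h3 : Real.log (706841864457/1000000000000 : ℝ) ≤ 2 * Real.log (210184720017/250000000000 : ℝ) := logstep (by norm_num) (by norm_num)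
  have h4 : Real.log (210184720017/250000000000 : ℝ) ≤ 2 * Real.log (916918142513/1000000000000 : ℝ) := logstep (by norm_num) (by norm_num)
  have h5 : Real.log (916918142513/1000000000000 : ℝ) ≤ 2 * Real.log (957558427729/1000000000000 : ℝ) := logstep (by norm_num) (by norm_num)
  have h6 : Real.log (957558427729/1000000000000 : ℝ) ≤ 2 * Real.log (978549144259/1000000000000 : ℝ) := logstep (by norm_num) (by norm_num)
  have h7 : Real.log (978549144259/1000000000000 : ℝ) ≤ 2 * Real.log (989216429433/1000000000000 : ℝ) := logstep (by norm_num) (by norm_num)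
  have h8 : Real.log (989216429433/1000000000000 : ℝ) ≤ 2 * Real.log (994593600137/1000000000000 : ℝ) := logstep (by norm_num) (by norm_num)
  have h9 : Real.log (994593600137/1000000000000 : ℝ) ≤ 2 * Real.log (498646568257/500000000000 : ℝ) := logstep (by norm_num) (by norm_num)
  have h10 : Real.log (498646568257/500000000000 : ℝ) ≤ 2 * Real.log (998645651127/1000000000000 : ℝ) := logstep (by norm_num) (by norm_num)
  have h11 : Real.log (998645651127/1000000000000 : ℝ) ≤ 2 * Real.log (499661298063/500000000000 : ℝ) := logstep (by norm_num) (by norm_num)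
  have h12 : Real.log (499661298063/500000000000 : ℝ) ≤ 2 * Real.log (199932248137/200000000000 : ℝ) := logstep (by norm_num) (by norm_num)
  have h13 : Real.log (199932248137/200000000000 : ℝ) ≤ 2 * Real.log (249957651499/250000000000 : ℝ) := logstep (by norm_num) (by norm_num)
  have h14 : Real.log (249957651499/250000000000 : ℝ) ≤ 2 * Real.log (999915299411/1000000000000 : ℝ) := logstep (by norm_num) (by norm_num)
  have h15 : Real.log (999915299411/1000000000000 : ℝ) ≤ 2 * Real.log (999957648809/1000000000000 : ℝ) := logstep (by norm_num) (by norm_num)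
  have h16 : Real.log (999957648809/1000000000000 : ℝ) ≤ 2 * Real.log (999978824181/1000000000000 : ℝ) := logstep (by norm_num) (by norm_num)
  have h17 : Real.log (999978824181/1000000000000 : ℝ) ≤ 2 * Real.log (199997882407/200000000000 : ℝ) := logstep (by norm_num) (by norm_num)
  have h18 : Real.log (199997882407/200000000000 : ℝ) ≤ 2 * Real.log (249998676501/250000000000 : ℝ) := logstep (by norm_num) (by norm_num)
  have h19 : Real.log (249998676501/250000000000 : ℝ) ≤ (249998676501/250000000000 : ℝ) - 1 := Real.log_le_sub_one_of_pos (by norm_num)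
  have h20 : Real.log ((2003/500 : ℝ))⁻¹ = - Real.log (2003/500 : ℝ) := Real.log_inv _
  linarith

private lemma logc2 : (147350976/244140625 : ℝ) ≤ Real.log (9143/5000 : ℝ) := by
  have h0 : Real.log ((9143/5000 : ℝ))⁻¹ ≤ Real.log (136716613803/250000000000 : ℝ) := by
    apply (Real.log_le_log_iff (by norm_num) (by norm_num)).mpr; norm_num
  have h1 : Real.log (136716613803/250000000000 : ℝ) ≤ 2 * Real.log (369752097767/500000000000 : ℝ) := logstep (by norm_num) (by norm_num)
  have h2 : Real.log (369752097767/500000000000 : ℝ) ≤ 2 * Real.log (429972148963/500000000000 : ℝ) := logstep (by norm_num) (by norm_num)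
  have h3 : Real.log (429972148963/500000000000 : ℝ) ≤ 2 * Real.log (463665908259/500000000000 : ℝ) := logstep (by norm_num) (by norm_num)
  have h4 : Real.log (463665908259/500000000000 : ℝ) ≤ 2 * Real.log (481490346871/500000000000 : ℝ) := logstep (by norm_num) (by norm_num)
  have h5 : Real.log (481490346871/500000000000 : ℝ) ≤ 2 * Real.log (981315797153/1000000000000 : ℝ) := logstep (by norm_num) (by norm_num)
  have h6 : Real.log (981315797153/1000000000000 : ℝ) ≤ 2 * Real.log (495306924329/500000000000 : ℝ) := logstep (by norm_num) (by norm_num)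
  have h7 : Real.log (495306924329/500000000000 : ℝ) ≤ 2 * Real.log (497647929931/500000000000 : ℝ) := logstep (by norm_num) (by norm_num)
  have h8 : Real.log (497647929931/500000000000 : ℝ) ≤ 2 * Real.log (997645157289/1000000000000 : ℝ) := logstep (by norm_num) (by norm_num)
  have h9 : Real.log (997645157289/1000000000000 : ℝ) ≤ 2 * Real.log (998821884667/1000000000000 : ℝ) := logstep (by norm_num) (by norm_num)
  have h10 : Real.log (998821884667/1000000000000 : ℝ) ≤ 2 * Real.log (999410768737/1000000000000 : ℝ) := logstep (by norm_num) (by norm_num)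
  have h11 : Real.log (999410768737/1000000000000 : ℝ) ≤ 2 * Real.log (999705340957/1000000000000 : ℝ) := logstep (by norm_num) (by norm_num)
  have h12 : Real.log (999705340957/1000000000000 : ℝ) ≤ 2 * Real.log (124981582453/125000000000 : ℝ) := logstep (by norm_num) (by norm_num)
  have h13 : Real.log (124981582453/125000000000 : ℝ) ≤ 2 * Real.log (999926327099/1000000000000 : ℝ) := logstep (by norm_num) (by norm_num)
  have h14 : Real.log (999926327099/1000000000000 : ℝ) ≤ 2 * Real.log (124995395359/125000000000 : ℝ) := logstep (by norm_num) (by norm_num)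
  have h15 : Real.log (124995395359/125000000000 : ℝ) ≤ 2 * Real.log (999981581267/1000000000000 : ℝ) := logstep (by norm_num) (by norm_num)
  have h16 : Real.log (999981581267/1000000000000 : ℝ) ≤ 2 * Real.log (15624856103/15625000000 : ℝ) := logstep (by norm_num) (by norm_num)
  have h17 : Real.log (15624856103/15625000000 : ℝ) ≤ 2 * Real.log (499997697643/500000000000 : ℝ) := logstep (by norm_num) (by norm_num)
  have h18 : Real.log (499997697643/500000000000 : ℝ) ≤ 2 * Real.log (999997697641/1000000000000 : ℝ) := logstep (by norm_num) (by norm_num)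
  have h19 : Real.log (999997697641/1000000000000 : ℝ) ≤ (999997697641/1000000000000 : ℝ) - 1 := Real.log_le_sub_one_of_pos (by norm_num)
  have h20 : Real.log ((9143/5000 : ℝ))⁻¹ = - Real.log (9143/5000 : ℝ) := Real.log_inv _
  linarith

private lemma logc3 : (25488384/48828125 : ℝ) ≤ Real.log (8427/5000 : ℝ) := by
  have h0 : Real.log ((8427/5000 : ℝ))⁻¹ ≤ Real.log (59333096001/100000000000 : ℝ) := by
    apply (Real.log_le_log_iff (by norm_num) (by norm_num)).mpr; norm_num
  have h1 : Real.log (59333096001/100000000000 : ℝ) ≤ 2 * Real.log (770279793329/1000000000000 : ℝ) := logstep (by norm_num) (by norm_num)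
  have h2 : Real.log (770279793329/1000000000000 : ℝ) ≤ 2 * Real.log (175531170261/200000000000 : ℝ) := logstep (by norm_num) (by norm_num)
  have h3 : Real.log (175531170261/200000000000 : ℝ) ≤ 2 * Real.log (936832883339/1000000000000 : ℝ) := logstep (by norm_num) (by norm_num)
  have h4 : Real.log (936832883339/1000000000000 : ℝ) ≤ 2 * Real.log (967901277683/1000000000000 : ℝ) := logstep (by norm_num) (by norm_num)
  have h5 : Real.log (967901277683/1000000000000 : ℝ) ≤ 2 * Real.log (983819738409/1000000000000 : ℝ) := logstep (by norm_num) (by norm_num)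
  have h6 : Real.log (983819738409/1000000000000 : ℝ) ≤ 2 * Real.log (495938438319/500000000000 : ℝ) := logstep (by norm_num) (by norm_num)
  have h7 : Real.log (495938438319/500000000000 : ℝ) ≤ 2 * Real.log (497965078253/500000000000 : ℝ) := logstep (by norm_num) (by norm_num)
  have h8 : Real.log (497965078253/500000000000 : ℝ) ≤ 2 * Real.log (124745375447/125000000000 : ℝ) := logstep (by norm_num) (by norm_num)
  have h9 : Real.log (124745375447/125000000000 : ℝ) ≤ 2 * Real.log (99898098259/100000000000 : ℝ) := logstep (by norm_num) (by norm_num)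
  have h10 : Real.log (99898098259/100000000000 : ℝ) ≤ 2 * Real.log (99949036143/100000000000 : ℝ) := logstep (by norm_num) (by norm_num)
  have h11 : Real.log (99949036143/100000000000 : ℝ) ≤ 2 * Real.log (999745148241/1000000000000 : ℝ) := logstep (by norm_num) (by norm_num)
  have h12 : Real.log (999745148241/1000000000000 : ℝ) ≤ 2 * Real.log (999872566001/1000000000000 : ℝ) := logstep (by norm_num) (by norm_num)
  have h13 : Real.log (999872566001/1000000000000 : ℝ) ≤ 2 * Real.log (999936280971/1000000000000 : ℝ) := logstep (by norm_num) (by norm_num)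
  have h14 : Real.log (999936280971/1000000000000 : ℝ) ≤ 2 * Real.log (499984069989/500000000000 : ℝ) := logstep (by norm_num) (by norm_num)
  have h15 : Real.log (499984069989/500000000000 : ℝ) ≤ 2 * Real.log (999984069863/1000000000000 : ℝ) := logstep (by norm_num) (by norm_num)
  have h16 : Real.log (999984069863/1000000000000 : ℝ) ≤ 2 * Real.log (9999920349/10000000000 : ℝ) := logstep (by norm_num) (by norm_num)
  have h17 : Real.log (9999920349/10000000000 : ℝ) ≤ 2 * Real.log (999996017443/1000000000000 : ℝ) := logstep (by norm_num) (by norm_num)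
  have h18 : Real.log (999996017443/1000000000000 : ℝ) ≤ 2 * Real.log (12499975109/12500000000 : ℝ) := logstep (by norm_num) (by norm_num)
  have h19 : Real.log (12499975109/12500000000 : ℝ) ≤ (12499975109/12500000000 : ℝ) - 1 := Real.log_le_sub_one_of_pos (by norm_num)
  have h20 : Real.log ((8427/5000 : ℝ))⁻¹ = - Real.log (8427/5000 : ℝ) := Real.log_inv _
  linarith

private lemma logc4 : (-67451392/244140625 : ℝ) ≤ Real.log (3793/5000 : ℝ) := by
  have h0 : Real.log ((3793/5000 : ℝ))⁻¹ ≤ Real.log (164777221197/125000000000 : ℝ) := by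
    apply (Real.log_le_log_iff (by norm_num) (by norm_num)).mpr; norm_num
  have h1 : Real.log (164777221197/125000000000 : ℝ) ≤ 2 * Real.log (114813665109/100000000000 : ℝ) := logstep (by norm_num) (by norm_num)
  have h2 : Real.log (114813665109/100000000000 : ℝ) ≤ 2 * Real.log (267877846589/250000000000 : ℝ) := logstep (by norm_num) (by norm_num)
  have h3 : Real.log (267877846589/250000000000 : ℝ) ≤ 2 * Real.log (258784585413/250000000000 : ℝ) := logstep (by norm_num) (by norm_num)
  have h4 : Real.log (258784585413/250000000000 : ℝ) ≤ 2 * Real.log (101741748641/100000000000 : ℝ) := logstep (by norm_num) (by norm_num)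
  have h5 : Real.log (101741748641/100000000000 : ℝ) ≤ 2 * Real.log (201734229759/200000000000 : ℝ) := logstep (by norm_num) (by norm_num)
  have h6 : Real.log (201734229759/200000000000 : ℝ) ≤ 2 * Real.log (251081554081/250000000000 : ℝ) := logstep (by norm_num) (by norm_num)
  have h7 : Real.log (251081554081/250000000000 : ℝ) ≤ 2 * Real.log (1002160773691/1000000000000 : ℝ) := logstep (by norm_num) (by norm_num)
  have h8 : Real.log (1002160773691/1000000000000 : ℝ) ≤ 2 * Real.log (500539901929/500000000000 : ℝ) := logstep (by norm_num) (by norm_num)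
  have h9 : Real.log (500539901929/500000000000 : ℝ) ≤ 2 * Real.log (1000539756261/1000000000000 : ℝ) := logstep (by norm_num) (by norm_num)
  have h10 : Real.log (1000539756261/1000000000000 : ℝ) ≤ 2 * Real.log (250067460431/250000000000 : ℝ) := logstep (by norm_num) (by norm_num)
  have h11 : Real.log (250067460431/250000000000 : ℝ) ≤ 2 * Real.log (500067455881/500000000000 : ℝ) := logstep (by norm_num) (by norm_num)
  have h12 : Real.log (500067455881/500000000000 : ℝ) ≤ 2 * Real.log (1000067453607/1000000000000 : ℝ) := logstep (by norm_num) (by norm_num)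
  have h13 : Real.log (1000067453607/1000000000000 : ℝ) ≤ 2 * Real.log (200006745247/200000000000 : ℝ) := logstep (by norm_num) (by norm_num)
  have h14 : Real.log (200006745247/200000000000 : ℝ) ≤ 2 * Real.log (3906315871/3906250000 : ℝ) := logstep (by norm_num) (by norm_num)
  have h15 : Real.log (3906315871/3906250000 : ℝ) ≤ 2 * Real.log (1000008431453/1000000000000 : ℝ) := logstep (by norm_num) (by norm_num)
  have h16 : Real.log (1000008431453/1000000000000 : ℝ) ≤ 2 * Real.log (500002107859/500000000000 : ℝ) := logstep (by norm_num) (by norm_num)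
  have h17 : Real.log (500002107859/500000000000 : ℝ) ≤ 2 * Real.log (1000002107857/1000000000000 : ℝ) := logstep (by norm_num) (by norm_num)
  have h18 : Real.log (1000002107857/1000000000000 : ℝ) ≤ 2 * Real.log (125000131741/125000000000 : ℝ) := logstep (by norm_num) (by norm_num)
  have h19 : Real.log (125000131741/125000000000 : ℝ) ≤ (125000131741/125000000000 : ℝ) - 1 := Real.log_le_sub_one_of_pos (by norm_num)
  have h20 : Real.log ((3793/5000 : ℝ))⁻¹ = - Real.log (3793/5000 : ℝ) := Real.log_inv _
  linarith

private lemma logc5 : (-428761088/244140625 : ℝ) ≤ Real.log (1727/10000 : ℝ) := by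
  have h0 : Real.log ((1727/10000 : ℝ))⁻¹ ≤ Real.log (2895193977997/500000000000 : ℝ) := by
    apply (Real.log_le_log_iff (by norm_num) (by norm_num)).mpr; norm_num
  have h1 : Real.log (2895193977997/500000000000 : ℝ) ≤ 2 * Real.log (1203161248129/500000000000 : ℝ) := logstep (by norm_num) (by norm_num)
  have h2 : Real.log (1203161248129/500000000000 : ℝ) ≤ 2 * Real.log (1551232573233/1000000000000 : ℝ) := logstep (by norm_num) (by norm_num)
  have h3 : Real.log (1551232573233/1000000000000 : ℝ) ≤ 2 * Real.log (1245484874751/1000000000000 : ℝ) := logstep (by norm_num) (by norm_num)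
  have h4 : Real.log (1245484874751/1000000000000 : ℝ) ≤ 2 * Real.log (558006468321/500000000000 : ℝ) := logstep (by norm_num) (by norm_num)
  have h5 : Real.log (558006468321/500000000000 : ℝ) ≤ 2 * Real.log (211283026923/200000000000 : ℝ) := logstep (by norm_num) (by norm_num)
  have h6 : Real.log (211283026923/200000000000 : ℝ) ≤ 2 * Real.log (256955143777/250000000000 : ℝ) := logstep (by norm_num) (by norm_num)
  have h7 : Real.log (256955143777/250000000000 : ℝ) ≤ 2 * Real.log (126726857793/125000000000 : ℝ) := logstep (by norm_num) (by norm_num)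
  have h8 : Real.log (126726857793/125000000000 : ℝ) ≤ 2 * Real.log (503441869123/500000000000 : ℝ) := logstep (by norm_num) (by norm_num)
  have h9 : Real.log (503441869123/500000000000 : ℝ) ≤ 2 * Real.log (62714747887/62500000000 : ℝ) := logstep (by norm_num) (by norm_num)
  have h10 : Real.log (62714747887/62500000000 : ℝ) ≤ 2 * Real.log (1001716509893/1000000000000 : ℝ) := logstep (by norm_num) (by norm_num)
  have h11 : Real.log (1001716509893/1000000000000 : ℝ) ≤ 2 * Real.log (500428943481/500000000000 : ℝ) := logstep (by norm_num) (by norm_num)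
  have h12 : Real.log (500428943481/500000000000 : ℝ) ≤ 2 * Real.log (40017154061/40000000000 : ℝ) := logstep (by norm_num) (by norm_num)
  have h13 : Real.log (40017154061/40000000000 : ℝ) ≤ 2 * Real.log (1000214402779/1000000000000 : ℝ) := logstep (by norm_num) (by norm_num)
  have h14 : Real.log (1000214402779/1000000000000 : ℝ) ≤ 2 * Real.log (200021439129/200000000000 : ℝ) := logstep (by norm_num) (by norm_num)
  have h15 : Real.log (200021439129/200000000000 : ℝ) ≤ 2 * Real.log (1000053596387/1000000000000 : ℝ) := logstep (by norm_num) (by norm_num)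
  have h16 : Real.log (1000053596387/1000000000000 : ℝ) ≤ 2 * Real.log (200005359567/200000000000 : ℝ) := logstep (by norm_num) (by norm_num)
  have h17 : Real.log (200005359567/200000000000 : ℝ) ≤ 2 * Real.log (250003349707/250000000000 : ℝ) := logstep (by norm_num) (by norm_num)
  have h18 : Real.log (250003349707/250000000000 : ℝ) ≤ 2 * Real.log (7812552339/7812500000 : ℝ) := logstep (by norm_num) (by norm_num)
  have h19 : Real.log (7812552339/7812500000 : ℝ) ≤ (7812552339/7812500000 : ℝ) - 1 := Real.log_le_sub_one_of_pos (by norm_num)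
  have h20 : Real.log ((1727/10000 : ℝ))⁻¹ = - Real.log (1727/10000 : ℝ) := Real.log_inv _
  linarith

set_option maxHeartbeats 1000000 in
private lemma key {x : ℝ} (hx : x ^ 2 ≤ 8) :
    x + 0.2456 * (x ^ 2 - 4) + 0.0887 * (x ^ 3 - 6 * x) + 0.0295 * (x ^ 4 - 8 * x ^ 2 + 8)
      + 1.9169 * Real.log (3 - x) ≥ 1.1691 := by
  have hxu : x ≤ 282843/100000 := by nlinarith
  have hxl : -(282843:ℝ)/100000 ≤ x := by nlinarith
  have hx3 : (0:ℝ) < 3 - x := by linarith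
  rcases le_or_gt x (-(47/20) : ℝ) with h1 | h1
  ·
    have hA : (0:ℝ) ≤ x - (-(282843/100000)) := by linarith
    have hB : (0:ℝ) ≤ (-(47/20)) - x := by linarith
    have hlog := tangent hx3 (by norm_num : (0:ℝ) < (53541/10000 : ℝ)) logc0
    have hD : (53541/10000 : ℝ) / (3 - x) ≤ (295/19169) * x ^ 4 + (887/19169) * x ^ 3 + (96/19169) * x ^ 2 + (4678/19169) * x + (7855673405806/4679931640625) := by
      rw [div_le_iff₀ hx3]
      linarith [pow_nonneg hB 5, mul_nonneg (pow_nonneg hA 1) (pow_nonneg hB 4), mul_nonneg (pow_nonneg hA 2) (pow_nonneg hB 3), mul_nonneg (pow_nonneg hA 3) (pow_nonneg hB 2), mul_nonneg (pow_nonneg hA 4) (pow_nonneg hB 1), pow_nonneg hA 5]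
    linarith [hlog, hD]
  rcases le_or_gt x (-(39/20) : ℝ) with h2 | h2
  ·
    have hA : (0:ℝ) ≤ x - (-(47/20)) := by linarith
    have hB : (0:ℝ) ≤ (-(39/20)) - x := by linarith
    have hlog := tangent hx3 (by norm_num : (0:ℝ) < (53541/10000 : ℝ)) logc0
    have hD : (53541/10000 : ℝ) / (3 - x) ≤ (295/19169) * x ^ 4 + (887/19169) * x ^ 3 + (96/19169) * x ^ 2 + (4678/19169) * x + (7855673405806/4679931640625) := by
      rw [div_le_iff₀ hx3]
      linarith [pow_nonneg hB 5, mul_nonneg (pow_nonneg hA 1) (pow_nonneg hB 4), mul_nonneg (pow_nonneg hA 2) (pow_nonneg hB 3), mul_nonneg (pow_nonneg hA 3) (pow_nonneg hB 2), mul_nonneg (pow_nonneg hA 4) (pow_nonneg hB 1), pow_nonneg hA 5]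
    linarith [hlog, hD]
  rcases le_or_gt x ((11/50) : ℝ) with h3 | h3
  ·
    have hA : (0:ℝ) ≤ x - (-(39/20)) := by linarith
    have hB : (0:ℝ) ≤ (11/50) - x := by linarith
    have hlog := tangent hx3 (by norm_num : (0:ℝ) < (2003/500 : ℝ)) logc1
    have hD : (2003/500 : ℝ) / (3 - x) ≤ (295/19169) * x ^ 4 + (887/19169) * x ^ 3 + (96/19169) * x ^ 2 + (4678/19169) * x + (6498176965486/4679931640625) := by
      rw [div_le_iff₀ hx3]
      linarith [pow_nonneg hB 5, mul_nonneg (pow_nonneg hA 1) (pow_nonneg hB 4), mul_nonneg (pow_nonneg hA 2) (pow_nonneg hB 3), mul_nonneg (pow_nonneg hA 3) (pow_nonneg hB 2), mul_nonneg (pow_nonneg hA 4) (pow_nonneg hB 1), pow_nonneg hA 5]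
    linarith [hlog, hD]
  rcases le_or_gt x ((1243/1000) : ℝ) with h4 | h4
  ·
    have hA : (0:ℝ) ≤ x - (11/50) := by linarith
    have hB : (0:ℝ) ≤ (1243/1000) - x := by linarith
    have hlog := tangent hx3 (by norm_num : (0:ℝ) < (9143/5000 : ℝ)) logc2
    have hD : (9143/5000 : ℝ) / (3 - x) ≤ (295/19169) * x ^ 4 + (887/19169) * x ^ 3 + (96/19169) * x ^ 2 + (4678/19169) * x + (2827988827694/4679931640625) := by
      rw [div_le_iff₀ hx3]
      linarith [pow_nonneg hB 6, mul_nonneg (pow_nonneg hA 1) (pow_nonneg hB 5), mul_nonneg (pow_nonneg hA 2) (pow_nonneg hB 4), mul_nonneg (pow_nonneg hA 3) (pow_nonneg hB 3), mul_nonneg (pow_nonneg hA 4) (pow_nonneg hB 2), mul_nonneg (pow_nonneg hA 5) (pow_nonneg hB 1), pow_nonneg hA 6]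
    linarith [hlog, hD]
  rcases le_or_gt x ((3679/2000) : ℝ) with h5 | h5
  ·
    have hA : (0:ℝ) ≤ x - (1243/1000) := by linarith
    have hB : (0:ℝ) ≤ (3679/2000) - x := by linarith
    have hlog := tangent hx3 (by norm_num : (0:ℝ) < (8427/5000 : ℝ)) logc3
    have hD : (8427/5000 : ℝ) / (3 - x) ≤ (295/19169) * x ^ 4 + (887/19169) * x ^ 3 + (96/19169) * x ^ 2 + (4678/19169) * x + (489270426646/935986328125) := by
      rw [div_le_iff₀ hx3]
      linarith [pow_nonneg hB 5, mul_nonneg (pow_nonneg hA 1) (pow_nonneg hB 4), mul_nonneg (pow_nonneg hA 2) (pow_nonneg hB 3), mul_nonneg (pow_nonneg hA 3) (pow_nonneg hB 2), mul_nonneg (pow_nonneg hA 4) (pow_nonneg hB 1), pow_nonneg hA 5]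
    linarith [hlog, hD]
  rcases le_or_gt x ((521/200) : ℝ) with h6 | h6
  ·
    have hA : (0:ℝ) ≤ x - (3679/2000) := by linarith
    have hB : (0:ℝ) ≤ (521/200) - x := by linarith
    have hlog := tangent hx3 (by norm_num : (0:ℝ) < (3793/5000 : ℝ)) logc4
    have hD : (3793/5000 : ℝ) / (3 - x) ≤ (295/19169) * x ^ 4 + (887/19169) * x ^ 3 + (96/19169) * x ^ 2 + (4678/19169) * x + (-(1289557764498/4679931640625)) := by
      rw [div_le_iff₀ hx3]
      linarith [pow_nonneg hB 5, mul_nonneg (pow_nonneg hA 1) (pow_nonneg hB 4), mul_nonneg (pow_nonneg hA 2) (pow_nonneg hB 3), mul_nonneg (pow_nonneg hA 3) (pow_nonneg hB 2), mul_nonneg (pow_nonneg hA 4) (pow_nonneg hB 1), pow_nonneg hA 5]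
    linarith [hlog, hD]
  have hA : (0:ℝ) ≤ x - (521/200) := by linarith
  have hB : (0:ℝ) ≤ (282843/100000) - x := by linarith
  have hlog := tangent hx3 (by norm_num : (0:ℝ) < (1727/10000 : ℝ)) logc5
  have hD : (1727/10000 : ℝ) / (3 - x) ≤ (295/19169) * x ^ 4 + (887/19169) * x ^ 3 + (96/19169) * x ^ 2 + (4678/19169) * x + (-(8215503327122/4679931640625)) := by
    rw [div_le_iff₀ hx3]
    linarith [pow_nonneg hB 5, mul_nonneg (pow_nonneg hA 1) (pow_nonneg hB 4), mul_nonneg (pow_nonneg hA 2) (pow_nonneg hB 3), mul_nonneg (pow_nonneg hA 3) (pow_nonneg hB 2), mul_nonneg (pow_nonneg hA 4) (pow_nonneg hB 1), pow_nonneg hA 5]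
  linarith [hlog, hD]

/-- Lemma 2.2 of the paper, in terms of the real parts `β i` of the Frobenius
eigenvalue pairs of an abelian variety over `F₂`. -/
theorem stmt_0 (n : ℕ) (β : Fin n → ℝ) (hβ : ∀ i, |β i| ≤ 2 * Real.sqrt 2) :
    (∑ i, β i) + 0.2456 * (∑ i, (β i ^ 2 - 4)) + 0.0887 * (∑ i, (β i ^ 3 - 6 * β i))
      + 0.0295 * (∑ i, (β i ^ 4 - 8 * β i ^ 2 + 8))
    ≥ 1.1691 * n - 1.9169 * Real.log (∏ i, (3 - β i)) := by
  have hsq : ∀ i, β i ^ 2 ≤ 8 := by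
    intro i
    have h := hβ i
    have h2 : (2 * Real.sqrt 2) ^ 2 = 8 := by
      rw [mul_pow, Real.sq_sqrt (by norm_num : (0:ℝ) ≤ 2)]; norm_num
    calc β i ^ 2 = |β i| ^ 2 := (sq_abs _).symm
      _ ≤ (2 * Real.sqrt 2) ^ 2 := by
          apply pow_le_pow_left₀ (abs_nonneg _) h
      _ = 8 := h2
  have hne : ∀ i ∈ Finset.univ, (3 - β i) ≠ 0 := by
    intro i _
    have := hsq i
    nlinarith
  rw [Real.log_prod hne]
  rw [Finset.mul_sum, Finset.mul_sum, Finset.mul_sum, Finset.mul_sum]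
  have hn : (1.1691 : ℝ) * n = ∑ _i : Fin n, (1.1691 : ℝ) := by
    rw [Finset.sum_const, Finset.card_univ, Fintype.card_fin, nsmul_eq_mul, mul_comm]
  rw [hn, ← Finset.sum_sub_distrib, ← Finset.sum_add_distrib, ← Finset.sum_add_distrib,
    ← Finset.sum_add_distrib]
  apply Finset.sum_le_sum
  intro i _
  have := key (hsq i)
  linarith
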